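/- Let n be a natural number, K > 0 a real number, Q₁ and Q₂ symmetric positive semidefinite real n×n matrices, ρ > 0, τ > 0, vectors c, r̄₁, r̄₂ ∈ ℝⁿ, e ∈ ℝⁿ the all-ones vector, and real constants κ₁, κ₂, κ₃. Define H : ℝⁿ × ℝⁿ × ℝ × ℝ × ℝ × ℝ × ℝ → ℝⁿ × ℝⁿ × ℝ × ℝ × ℝ × ℝ × ℝ by H(x, y, α₁, α₂, π₁, π₂, π₃) := (2Q₁x + (1/ρ + τ)x − c + α₁e − α₂r̄₁ + 2π₃(x − y), (2/K)Q₂y + π₁e − π₂r̄₂ + 2π₃(y − x), 1 − ⟨e, x⟩, ⟨r̄₁, x⟩ − κ₁, 1 − ⟨e, y⟩, ⟨r̄₂, y⟩ − κ₂, κ₃ − ‖x − y‖²). Then H is monotone on the convex set S := {(x, y, α₁, α₂, π₁, π₂, π₃) : π₃ ≥ 0}: for all z, z' ∈ S, ⟨H(z) − H(z'), z − z'⟩ ≥ 0. -/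

import Mathlib

open scoped InnerProductSpace

lemma aux9 {n : ℕ} {Q : Matrix (Fin n) (Fin n) ℝ} (hQ : Q.PosSemidef)
    (u : EuclideanSpace ℝ (Fin n)) : 0 ≤ ⟪Matrix.toEuclideanLin Q u, u⟫_ℝ := by
  have h := hQ.dotProduct_mulVec_nonneg (WithLp.equiv 2 _ u)
  simp only [dotProduct, star_trivial, Pi.star_apply] at h
  simpa [Matrix.toEuclideanLin_apply, PiLp.inner_apply, RCLike.inner_apply, mul_comm] using h

/-- The map `H` of the linearized two-stage SVI for the Markowitz-type model is monotone
on the set `{π₃ ≥ 0}`: writing the inner product on the product space as the sum of the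
componentwise inner products, `⟪H(z) − H(z'), z − z'⟫ ≥ 0` for all `z, z'` with
`π₃, π₃' ≥ 0`. -/
theorem stmt_9 {n : ℕ} (K : ℝ) (hK : 0 < K)
    (Q₁ Q₂ : Matrix (Fin n) (Fin n) ℝ)
    (hQ₁sym : Q₁.IsSymm) (hQ₂sym : Q₂.IsSymm)
    (hQ₁ : Q₁.PosSemidef) (hQ₂ : Q₂.PosSemidef)
    (ρ τ : ℝ) (hρ : 0 < ρ) (hτ : 0 < τ)
    (c r₁ r₂ : EuclideanSpace ℝ (Fin n))
    (e : EuclideanSpace ℝ (Fin n)) (he : ∀ i, e i = 1)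
    (κ₁ κ₂ κ₃ : ℝ) :
    ∀ (x y x' y' : EuclideanSpace ℝ (Fin n))
      (α₁ α₂ π₁ π₂ π₃ α₁' α₂' π₁' π₂' π₃' : ℝ),
      0 ≤ π₃ → 0 ≤ π₃' →
      0 ≤
        ⟪((2 : ℝ) • Matrix.toEuclideanLin Q₁ x + (1 / ρ + τ) • x - c + α₁ • e - α₂ • r₁ +
              (2 * π₃) • (x - y)) -
            ((2 : ℝ) • Matrix.toEuclideanLin Q₁ x' + (1 / ρ + τ) • x' - c + α₁' • e -
              α₂' • r₁ + (2 * π₃') • (x' - y')), x - x'⟫_ℝ +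
        ⟪((2 / K) • Matrix.toEuclideanLin Q₂ y + π₁ • e - π₂ • r₂ + (2 * π₃) • (y - x)) -
            ((2 / K) • Matrix.toEuclideanLin Q₂ y' + π₁' • e - π₂' • r₂ +
              (2 * π₃') • (y' - x')), y - y'⟫_ℝ +
        ((1 - ⟪e, x⟫_ℝ) - (1 - ⟪e, x'⟫_ℝ)) * (α₁ - α₁') +
        ((⟪r₁, x⟫_ℝ - κ₁) - (⟪r₁, x'⟫_ℝ - κ₁)) * (α₂ - α₂') +
        ((1 - ⟪e, y⟫_ℝ) - (1 - ⟪e, y'⟫_ℝ)) * (π₁ - π₁') +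
        ((⟪r₂, y⟫_ℝ - κ₂) - (⟪r₂, y'⟫_ℝ - κ₂)) * (π₂ - π₂') +
        ((κ₃ - ‖x - y‖ ^ 2) - (κ₃ - ‖x' - y'‖ ^ 2)) * (π₃ - π₃') := by
  intro x y x' y' α₁ α₂ π₁ π₂ π₃ α₁' α₂' π₁' π₂' π₃' h3 h3'
  have hA := aux9 hQ₁ (x - x')
  have hB := aux9 hQ₂ (y - y')
  have hu : (0:ℝ) ≤ ⟪x - x', x - x'⟫_ℝ := real_inner_self_nonneg
  have hw : (0:ℝ) ≤ ⟪(x - y) - (x' - y'), (x - y) - (x' - y')⟫_ℝ := real_inner_self_nonneg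
  have key : ⟪((2 : ℝ) • Matrix.toEuclideanLin Q₁ x + (1 / ρ + τ) • x - c + α₁ • e - α₂ • r₁ +
              (2 * π₃) • (x - y)) -
            ((2 : ℝ) • Matrix.toEuclideanLin Q₁ x' + (1 / ρ + τ) • x' - c + α₁' • e -
              α₂' • r₁ + (2 * π₃') • (x' - y')), x - x'⟫_ℝ +
        ⟪((2 / K) • Matrix.toEuclideanLin Q₂ y + π₁ • e - π₂ • r₂ + (2 * π₃) • (y - x)) -
            ((2 / K) • Matrix.toEuclideanLin Q₂ y' + π₁' • e - π₂' • r₂ +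
              (2 * π₃') • (y' - x')), y - y'⟫_ℝ +
        ((1 - ⟪e, x⟫_ℝ) - (1 - ⟪e, x'⟫_ℝ)) * (α₁ - α₁') +
        ((⟪r₁, x⟫_ℝ - κ₁) - (⟪r₁, x'⟫_ℝ - κ₁)) * (α₂ - α₂') +
        ((1 - ⟪e, y⟫_ℝ) - (1 - ⟪e, y'⟫_ℝ)) * (π₁ - π₁') +
        ((⟪r₂, y⟫_ℝ - κ₂) - (⟪r₂, y'⟫_ℝ - κ₂)) * (π₂ - π₂') +
        ((κ₃ - ‖x - y‖ ^ 2) - (κ₃ - ‖x' - y'‖ ^ 2)) * (π₃ - π₃')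
      = 2 * ⟪Matrix.toEuclideanLin Q₁ (x - x'), x - x'⟫_ℝ
        + (1 / ρ + τ) * ⟪x - x', x - x'⟫_ℝ
        + (2 / K) * ⟪Matrix.toEuclideanLin Q₂ (y - y'), y - y'⟫_ℝ
        + (π₃ + π₃') * ⟪(x - y) - (x' - y'), (x - y) - (x' - y')⟫_ℝ := by
    simp only [← real_inner_self_eq_norm_sq, map_sub, inner_sub_left, inner_sub_right,
      inner_add_left, inner_add_right, real_inner_smul_left, real_inner_smul_right,
      real_inner_comm x' x, real_inner_comm y x, real_inner_comm y' x,
      real_inner_comm x' y, real_inner_comm y' y, real_inner_comm y' x',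
      real_inner_comm x e, real_inner_comm x' e, real_inner_comm y e, real_inner_comm y' e,
      real_inner_comm x r₁, real_inner_comm x' r₁, real_inner_comm y r₂, real_inner_comm y' r₂]
    ring
  rw [key]
  have h1 : (0:ℝ) ≤ 1 / ρ + τ := by positivity
  nlinarith [mul_nonneg h1 hu, mul_nonneg (add_nonneg h3 h3') hw,
    mul_nonneg (le_of_lt (by positivity : (0:ℝ) < 2 / K)) hB]
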